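/- Let p be a prime with p ≡ 3 (mod 4), and let d be coprime to p-1, c in F_p. Then the permutation of F_p given by x ↦ x^d + c is even. -/

import Mathlib

theorem stmt_7 (p d : ℕ) (hp : p.Prime) [NeZero p] (hp4 : p % 4 = 3)
    (hd1 : 1 ≤ d) (hd2 : d < p - 1) (hcop : Nat.Coprime d (p - 1)) (c : ZMod p)
    (σ : Equiv.Perm (ZMod p)) (hσ : ∀ x, σ x = x ^ d + c) :
    Equiv.Perm.sign σ = 1 := by
  classical
  haveI : Fact p.Prime := ⟨hp⟩
  have hp3 : 3 ≤ p := by omega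
  have hp2 : p % 2 = 1 := by omega
  have hdodd : Odd d := by
    rcases Nat.even_or_odd d with he | ho
    · exfalso
      have h2 : (2:ℕ) ∣ d := he.two_dvd
      have h2' : (2:ℕ) ∣ p - 1 := by omega
      have := Nat.dvd_gcd h2 h2'
      rw [hcop] at this
      omega
    · exact ho
  -- inverse exponent
  obtain ⟨e, he⟩ : ∃ e, (d * e) % (p - 1) = 1 :=
    (Nat.exists_mul_mod_eq_one_of_coprime hcop (by omega)).imp fun _ h => h.2
  have hpow : ∀ x : ZMod p, x ≠ 0 → (x ^ d) ^ e = x := by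
    intro x hx
    rw [← pow_mul]
    conv_lhs => rw [← Nat.div_add_mod (d * e) (p - 1), he]
    rw [pow_add, pow_one, pow_mul,
      ZMod.pow_card_sub_one_eq_one hx, one_pow, one_mul]
  have hinj : ∀ x y : ZMod p, x ≠ 0 → y ≠ 0 → x ^ d = y ^ d → x = y := by
    intro x y hx hy h
    have := congrArg (· ^ e) h
    simpa [hpow x hx, hpow y hy] using this
  have hsq_pow : ∀ x : ZMod p, IsSquare x → IsSquare (x ^ d) := by
    rintro x ⟨r, rfl⟩
    exact ⟨r ^ d, by rw [mul_pow]⟩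
  have hns : ¬ IsSquare (-1 : ZMod p) := fun h =>
    (ZMod.exists_sq_eq_neg_one_iff.mp h) hp4
  have hboth : ∀ x : ZMod p, x ≠ 0 → IsSquare x → IsSquare (-x) → False := by
    intro x hx h1 h2
    apply hns
    have : IsSquare ((-x) * x⁻¹) := h2.mul h1.inv
    rwa [neg_mul, mul_inv_cancel₀ hx] at this
  have hnegsq : ∀ x : ZMod p, x ≠ 0 → ¬ IsSquare x → IsSquare (-x) := by
    intro x hx h
    have hchi : quadraticChar (ZMod p) (-x) = 1 := by
      have : (-x : ZMod p) = -1 * x := by ring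
      rw [this, map_mul, quadraticChar_neg_one_iff_not_isSquare.mpr hns,
        quadraticChar_neg_one_iff_not_isSquare.mpr h]
      ring
    exact (quadraticChar_one_iff_isSquare (neg_ne_zero.mpr hx)).mp hchi
  -- split off the translation
  set σ₀ : Equiv.Perm (ZMod p) := (Equiv.addRight c)⁻¹ * σ with hσ₀def
  have hσ₀ : ∀ x, σ₀ x = x ^ d := by
    intro x
    simp [hσ₀def, Equiv.Perm.mul_apply, Equiv.Perm.inv_def, hσ x]
  have hsplit : σ = (Equiv.addRight c : Equiv.Perm (ZMod p)) * σ₀ := by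
    rw [hσ₀def, mul_inv_cancel_left]
  -- sign of the translation
  have haddpow : ∀ (n : ℕ) (x : ZMod p),
      ((Equiv.addRight c : Equiv.Perm (ZMod p)) ^ n) x = x + n • c := by
    intro n
    induction n with
    | zero => simp
    | succ k ih =>
      intro x
      rw [pow_succ, Equiv.Perm.mul_apply, Equiv.coe_addRight, ih, succ_nsmul]
      ring
  have haddp : (Equiv.addRight c : Equiv.Perm (ZMod p)) ^ p = 1 := by
    ext x
    rw [haddpow]
    simp [nsmul_eq_mul, ZMod.natCast_self]
  have hsignadd : Equiv.Perm.sign (Equiv.addRight c : Equiv.Perm (ZMod p)) = 1 := by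
    have h1 : (Equiv.Perm.sign (Equiv.addRight c : Equiv.Perm (ZMod p))) ^ p = 1 := by
      rw [← map_pow, haddp, map_one]
    rcases Int.units_eq_one_or (Equiv.Perm.sign (Equiv.addRight c : Equiv.Perm (ZMod p)))
      with h | h
    · exact h
    · exfalso
      rw [h, Odd.neg_one_pow (Nat.odd_iff.mpr hp2)] at h1
      exact absurd h1 (by decide)
  -- the squares
  set A := {x : ZMod p // IsSquare x ∧ x ≠ 0} with hA
  have hτinj : Function.Injective (fun a : A =>
      (⟨a.1 ^ d, hsq_pow a.1 a.2.1, pow_ne_zero d a.2.2⟩ : A)) := by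
    intro a b h
    exact Subtype.ext (hinj a.1 b.1 a.2.2 b.2.2 (congrArg Subtype.val h))
  set τ : Equiv.Perm A := Equiv.ofBijective _
    (Finite.injective_iff_bijective.mp hτinj) with hτ
  have hτval : ∀ a : A, (τ a).1 = a.1 ^ d := fun a => rfl
  -- the big equivalence
  set E : Unit ⊕ A ⊕ A → ZMod p :=
    Sum.elim (fun _ => 0) (Sum.elim (fun a => a.1) (fun a => -a.1)) with hE
  have hEbij : Function.Bijective E := by
    constructor
    · rintro (y | a | a) (z | b | b) h <;>
        simp only [hE, Sum.elim_inl, Sum.elim_inr] at h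
      · rfl
      · exact absurd h.symm b.2.2
      · exact absurd (neg_eq_zero.mp h.symm) b.2.2
      · exact absurd h a.2.2
      · exact congrArg (fun t => Sum.inr (Sum.inl t)) (Subtype.ext h)
      · exact absurd (hboth b.1 b.2.2 b.2.1 (h ▸ a.2.1)) (fun hx => hx)
      · exact absurd (neg_eq_zero.mp h) a.2.2
      · exact absurd (hboth a.1 a.2.2 a.2.1 (h ▸ b.2.1)) (fun hx => hx)
      · exact congrArg (fun t => Sum.inr (Sum.inr t)) (Subtype.ext (neg_injective h))
    · intro x
      by_cases hx : x = 0
      · exact ⟨Sum.inl (), hx.symm⟩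
      · by_cases hxs : IsSquare x
        · exact ⟨Sum.inr (Sum.inl ⟨x, hxs, hx⟩), rfl⟩
        · exact ⟨Sum.inr (Sum.inr ⟨-x, hnegsq x hx hxs, neg_ne_zero.mpr hx⟩),
            neg_neg x⟩
  set Eq' : (Unit ⊕ A ⊕ A) ≃ ZMod p := Equiv.ofBijective E hEbij with hEq'
  set ρ : Equiv.Perm (Unit ⊕ A ⊕ A) :=
    Equiv.sumCongr (Equiv.refl Unit) (Equiv.sumCongr τ τ) with hρ
  have hconj : σ₀ = Eq'.permCongr ρ := by
    apply Equiv.ext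
    intro x
    obtain ⟨y, rfl⟩ := hEbij.surjective x
    have hEy : E y = Eq' y := rfl
    rw [hEy, Equiv.permCongr_apply, Equiv.symm_apply_apply]
    rcases y with y | a | a
    · show σ₀ 0 = Eq' (Sum.inl y)
      rw [hσ₀ 0, zero_pow (by omega : d ≠ 0)]
      rfl
    · show σ₀ a.1 = Eq' (Sum.inr (Sum.inl (τ a)))
      rw [hσ₀ a.1]
      show a.1 ^ d = (τ a).1
      rw [hτval]
    · show σ₀ (-a.1) = Eq' (Sum.inr (Sum.inr (τ a)))
      rw [hσ₀ (-a.1), Odd.neg_pow hdodd]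
      show -(a.1 ^ d) = -(τ a).1
      rw [hτval]
  have hsign₀ : Equiv.Perm.sign σ₀ = 1 := by
    rw [hconj, Equiv.Perm.sign_permCongr, hρ, Equiv.Perm.sign_sumCongr,
      Equiv.Perm.sign_sumCongr, Equiv.Perm.sign_refl, one_mul, Int.units_mul_self]
  rw [hsplit, map_mul, hsignadd, hsign₀, mul_one]
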